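/- For 0 < |q| < 1 and x ∈ ℂ* with |x/q| < 1 and x ∉ [1;q] = q^ℤ, splitting E_q(−q²/x) into even and odd terms yields: e_q(x/q) = ((q;q)_∞/θ_q(−x/q)) · ₀φ₁(−; q; q², q⁵/x²) − ((q;q)_∞/θ_q(−x/q)) · (q²/((1−q)x)) · ₀φ₁(−; q³; q², q⁷/x²). -/

import Mathlib

open Filter Topology Finset

/-- Finite q-Pochhammer symbol `(a;q)_n`. -/
noncomputable def qPoch (a q : ℂ) (n : ℕ) : ℂ := ∏ j ∈ Finset.range n, (1 - a * q ^ j)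

/-- The q-exponential `e_q(x) = Σ_{n≥0} x^n/(q;q)_n`. -/
noncomputable def qExp_e (q x : ℂ) : ℂ := ∑' n : ℕ, x ^ n / qPoch q q n

/-- Jacobi theta function `θ_q(x)`. -/
noncomputable def jTheta (q x : ℂ) : ℂ := ∑' n : ℤ, q ^ (n * (n - 1) / 2) * x ^ n

/-- Infinite q-Pochhammer symbol `(a;q)_∞`. -/
noncomputable def qPochInf (a q : ℂ) : ℂ := ∏' n : ℕ, (1 - a * q ^ n)

/-- Basic hypergeometric series `₀φ₁(−; b; q, z) = Σ_{n≥0} q^{n(n−1)} z^n/((b;q)_n (q;q)_n)`. -/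
noncomputable def phi01 (b q z : ℂ) : ℂ :=
  ∑' n : ℕ, q ^ (n * (n - 1)) * z ^ n / (qPoch b q n * qPoch q q n)

namespace QSplitAux

/-- terms of the Euler function -/
noncomputable def T (q z : ℂ) (m : ℕ) : ℂ := (-1)^m * q^(m*(m-1)/2) * z^m / qPoch q q m

/-- Euler's function `(z;q)_∞` as a series. -/
noncomputable def F (q z : ℂ) : ℂ := ∑' m, T q z m

lemma nat_binom_succ (m : ℕ) : (m+1)*m/2 = m*(m-1)/2 + m := by
  have h1 : (m+1)*m = m*(m-1) + 2*m := by
    cases m with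
    | zero => rfl
    | succ k => simp only [Nat.succ_sub_one]; ring
  have h2 : 2 ∣ m*(m-1) := by
    cases m with
    | zero => simp
    | succ k =>
      simp only [Nat.succ_sub_one]
      rw [Nat.mul_comm]
      exact (Nat.even_mul_succ_self k).two_dvd
  omega

lemma qPoch_succ (a q : ℂ) (n : ℕ) : qPoch a q (n+1) = qPoch a q n * (1 - a*q^n) :=
  Finset.prod_range_succ _ _

lemma one_sub_ne {w : ℂ} (hw : ‖w‖ < 1) : 1 - w ≠ 0 := by
  intro h
  have hw1 : w = 1 := by linear_combination -h
  rw [hw1] at hw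
  simp at hw

variable {q : ℂ}

lemma norm_q_mul_pow_lt (hq1 : ‖q‖ < 1) (j : ℕ) : ‖q * q ^ j‖ < 1 := by
  rw [norm_mul, norm_pow]
  have h1 : ‖q‖ ^ j ≤ 1 := pow_le_one₀ (norm_nonneg _) hq1.le
  nlinarith [norm_nonneg q]

lemma qPoch_ne_zero (hq1 : ‖q‖ < 1) (n : ℕ) : qPoch q q n ≠ 0 := by
  rw [qPoch, Finset.prod_ne_zero_iff]
  exact fun j _ => one_sub_ne (norm_q_mul_pow_lt hq1 j)

lemma summable_ratio {E : Type*} [NormedAddCommGroup E] [CompleteSpace E] {f : ℕ → E}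
    {g : ℕ → ℝ} {L : ℝ} (hL : L < 1)
    (hg : Tendsto g atTop (𝓝 L)) (h : ∀ n, ‖f (n+1)‖ ≤ g n * ‖f n‖) : Summable f := by
  apply summable_of_ratio_norm_eventually_le (r := (L+1)/2) (by linarith)
  filter_upwards [hg.eventually_lt_const (show L < (L+1)/2 by linarith)] with n hn
  calc ‖f (n+1)‖ ≤ g n * ‖f n‖ := h n
    _ ≤ (L+1)/2 * ‖f n‖ := by nlinarith [norm_nonneg (f n)]

lemma T_succ (hq1 : ‖q‖ < 1) (z : ℂ) (m : ℕ) :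
    T q z (m+1) = T q z m * (-(q^m * z) / (1 - q*q^m)) := by
  have h1 : qPoch q q m ≠ 0 := qPoch_ne_zero hq1 m
  have h2 : (1 - q*q^m) ≠ 0 := one_sub_ne (norm_q_mul_pow_lt hq1 m)
  rw [T, T, qPoch_succ, show (m+1)*((m+1)-1)/2 = m*(m-1)/2 + m by
    simpa using nat_binom_succ m, pow_add]
  field_simp
  ring

lemma tendsto_norm_q_pow_succ (hq1 : ‖q‖ < 1) :
    Tendsto (fun m : ℕ => ‖q‖^(m+1)) atTop (𝓝 0) := by
  simpa [Function.comp_def] using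
    (tendsto_pow_atTop_nhds_zero_of_lt_one (norm_nonneg q) hq1).comp (tendsto_add_atTop_nat 1)

lemma norm_one_sub_q_pow_pos (hq1 : ‖q‖ < 1) (m : ℕ) : (0:ℝ) < 1 - ‖q‖^(m+1) := by
  have h := pow_lt_one₀ (norm_nonneg q) hq1 (show m+1 ≠ 0 by omega)
  linarith

lemma norm_one_sub_ge (hq1 : ‖q‖ < 1) (m : ℕ) : 1 - ‖q‖^(m+1) ≤ ‖1 - q*q^m‖ := by
  calc 1 - ‖q‖^(m+1) = ‖(1:ℂ)‖ - ‖q*q^m‖ := by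
        rw [norm_one, norm_mul, norm_pow, pow_succ]; ring_nf
    _ ≤ ‖1 - q*q^m‖ := norm_sub_norm_le _ _

lemma summable_normT (hq1 : ‖q‖ < 1) (z : ℂ) : Summable (fun m => ‖T q z m‖) := by
  apply summable_ratio (L := 0) one_pos
      (g := fun m => ‖z‖ * ‖q‖^m / (1 - ‖q‖^(m+1)))
  · have h1 : Tendsto (fun m : ℕ => ‖z‖ * ‖q‖^m) atTop (𝓝 0) := by
      simpa using (tendsto_pow_atTop_nhds_zero_of_lt_one (norm_nonneg q) hq1).const_mul ‖z‖
    have h2 : Tendsto (fun m : ℕ => 1 - ‖q‖^(m+1)) atTop (𝓝 1) := by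
      simpa using (tendsto_const_nhds (x := (1:ℝ))).sub (tendsto_norm_q_pow_succ hq1)
    simpa [Pi.div_def] using h1.div h2 one_ne_zero
  · intro m
    rw [norm_norm, norm_norm, T_succ hq1 z m, norm_mul]
    rw [mul_comm (‖z‖ * ‖q‖^m / (1 - ‖q‖^(m+1))) _]
    apply mul_le_mul_of_nonneg_left _ (norm_nonneg _)
    rw [norm_div, norm_neg, norm_mul, norm_pow]
    calc ‖q‖^m * ‖z‖ / ‖1 - q*q^m‖ ≤ ‖q‖^m * ‖z‖ / (1 - ‖q‖^(m+1)) := by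
          gcongr
          · exact norm_one_sub_q_pow_pos hq1 m
          · exact norm_one_sub_ge hq1 m
      _ = ‖z‖ * ‖q‖^m / (1 - ‖q‖^(m+1)) := by ring

lemma summable_T (hq1 : ‖q‖ < 1) (z : ℂ) : Summable (T q z) :=
  (summable_normT hq1 z).of_norm


lemma T_zero (z : ℂ) : T q z 0 = 1 := by simp [T, qPoch]

lemma F_funeq (hq1 : ‖q‖ < 1) (z : ℂ) : F q z = (1 - z) * F q (q*z) := by
  have hs1 : Summable (T q z) := summable_T hq1 z
  have hs2 : Summable (T q (q*z)) := summable_T hq1 (q*z)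
  have key : ∀ m, T q z (m+1) - T q (q*z) (m+1) = -z * T q (q*z) m := by
    intro m
    have h1 : qPoch q q m ≠ 0 := qPoch_ne_zero hq1 m
    have h2 : (1 - q*q^m) ≠ 0 := one_sub_ne (norm_q_mul_pow_lt hq1 m)
    rw [T, T, T, qPoch_succ, show (m+1)*((m+1)-1)/2 = m*(m-1)/2 + m by
      simpa using nat_binom_succ m, pow_add]
    field_simp
    ring
  have h0 : T q z 0 - T q (q*z) 0 = 0 := by rw [T_zero, T_zero, sub_self]
  have hc : F q z - F q (q*z) = -z * F q (q*z) := by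
    calc F q z - F q (q*z) = ∑' m, (T q z m - T q (q*z) m) := (Summable.tsum_sub hs1 hs2).symm
      _ = (T q z 0 - T q (q*z) 0) + ∑' m, (T q z (m+1) - T q (q*z) (m+1)) :=
          Summable.tsum_eq_zero_add (hs1.sub hs2)
      _ = ∑' m, -z * T q (q*z) m := by rw [h0, zero_add]; exact tsum_congr key
      _ = -z * F q (q*z) := tsum_mul_left
  linear_combination hc

lemma F_iter (hq1 : ‖q‖ < 1) (z : ℂ) (N : ℕ) : F q z = qPoch z q N * F q (q^N * z) := by
  induction N with
  | zero => simp [qPoch]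
  | succ n ih =>
    rw [ih, F_funeq hq1 (q^n*z), qPoch_succ, show q*(q^n*z) = q^(n+1)*z by ring]
    ring

lemma F_zero_eq_one : F q 0 = 1 := by
  rw [F]
  rw [tsum_eq_single 0 (fun m hm => ?_)]
  · exact T_zero 0
  · rw [T, zero_pow hm, mul_zero, zero_div]

lemma F_tendsto_one (hq1 : ‖q‖ < 1) (z : ℂ) :
    Tendsto (fun N : ℕ => F q (q^N * z)) atTop (𝓝 1) := by
  have hb : ∀ N m, ‖T q (q^N*z) m‖ ≤ ‖T q z m‖ := by
    intro N m
    rw [T, T]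
    simp only [norm_div, norm_mul, norm_pow]
    gcongr
    have h1 : ‖q‖^N ≤ 1 := pow_le_one₀ (norm_nonneg _) hq1.le
    nlinarith [norm_nonneg z, norm_nonneg q, pow_nonneg (norm_nonneg q) N]
  have hcont : ∀ m, Tendsto (fun N : ℕ => T q (q^N*z) m) atTop (𝓝 (T q 0 m)) := by
    intro m
    have hz0 : Tendsto (fun N : ℕ => q^N * z) atTop (𝓝 0) := by
      simpa using (tendsto_pow_atTop_nhds_zero_of_norm_lt_one hq1).mul_const z
    have hco : Continuous (fun w : ℂ => T q w m) := by
      simp only [T]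
      fun_prop
    exact (hco.tendsto 0).comp hz0
  have := tendsto_tsum_of_dominated_convergence (f := fun N m => T q (q^N*z) m)
      (summable_normT hq1 z) hcont (Eventually.of_forall fun N m => hb N m)
  rw [show ∑' m, T q 0 m = 1 from F_zero_eq_one] at this
  exact this

lemma F_ne_zero (hq1 : ‖q‖ < 1) {z : ℂ} (hz : ∀ j : ℕ, 1 - z*q^j ≠ 0) : F q z ≠ 0 := by
  obtain ⟨N, hN⟩ := ((F_tendsto_one hq1 z).eventually_ne one_ne_zero).exists
  rw [F_iter hq1 z N]
  exact mul_ne_zero (Finset.prod_ne_zero_iff.2 fun j _ => hz j) hN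

lemma F_q_ne_zero (hq1 : ‖q‖ < 1) : F q q ≠ 0 :=
  F_ne_zero hq1 fun j => one_sub_ne (norm_q_mul_pow_lt hq1 j)

lemma qPochInf_eq (hq1 : ‖q‖ < 1) : (∏' n : ℕ, (1 - q * q ^ n)) = F q q := by
  have hne : ∀ n : ℕ, (1 - q*q^n) ≠ 0 := fun n => one_sub_ne (norm_q_mul_pow_lt hq1 n)
  have hlog : Summable (fun n => Complex.log (1 - q*q^n)) := by
    apply Summable.of_norm_bounded_eventually (g := fun n => 3/2 * ‖q‖^n)
      (((summable_geometric_of_lt_one (norm_nonneg q) hq1)).mul_left _)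
    rw [Nat.cofinite_eq_atTop]
    filter_upwards [(tendsto_norm_q_pow_succ hq1).eventually_le_const
      (show (0:ℝ) < 1/2 by norm_num)] with n hn
    have h1 : ‖-(q*q^n)‖ ≤ 1/2 := by
      rw [norm_neg, norm_mul, norm_pow, ← pow_succ']
      exact hn
    calc ‖Complex.log (1 - q*q^n)‖ = ‖Complex.log (1 + -(q*q^n))‖ := by rw [sub_eq_add_neg]
      _ ≤ 3/2 * ‖-(q*q^n)‖ := Complex.norm_log_one_add_half_le_self h1
      _ ≤ 3/2 * ‖q‖^n := by
          rw [norm_neg, norm_mul, norm_pow]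
          nlinarith [pow_nonneg (norm_nonneg q) n, norm_nonneg q,
            pow_le_one₀ (norm_nonneg q) hq1.le (n := n)]
  have hmult : Multipliable (fun n : ℕ => 1 - q*q^n) :=
    Complex.multipliable_of_summable_log hlog
  have ht1 := hmult.hasProd.tendsto_prod_nat
  have hFq := F_q_ne_zero hq1
  have ht2 : Tendsto (fun N => ∏ i ∈ Finset.range N, (1 - q*q^i)) atTop (𝓝 (F q q)) := by
    have hN : ∀ N, ∏ i ∈ Finset.range N, (1 - q*q^i) = F q q * (F q (q^N * q))⁻¹ := by
      intro N
      have h := F_iter hq1 q N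
      have hne2 : F q (q^N*q) ≠ 0 := by
        intro h0
        rw [h0, mul_zero] at h
        exact hFq h
      rw [qPoch] at h
      rw [h]
      field_simp
      rw [mul_div_assoc, div_self (by rwa [mul_comm] at hne2), mul_one]
    simp only [hN]
    have := ((F_tendsto_one hq1 q).inv₀ one_ne_zero).const_mul (F q q)
    simpa using this
  exact tendsto_nhds_unique ht1 ht2


lemma nat_two_dvd (m : ℕ) : 2 ∣ m*(m-1) := by
  cases m with
  | zero => simp
  | succ k =>
    simp only [Nat.succ_sub_one]
    rw [Nat.mul_comm]
    exact (Nat.even_mul_succ_self k).two_dvd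

lemma int_two_dvd (n : ℤ) : 2 ∣ n*(n-1) := by
  obtain ⟨c, hc⟩ := Int.even_mul_succ_self (n-1)
  exact ⟨c, by linear_combination hc⟩

lemma int_binom_cast (m : ℕ) : (m:ℤ)*((m:ℤ)-1)/2 = ((m*(m-1)/2 : ℕ) : ℤ) := by
  have h1 : (m:ℤ)*((m:ℤ)-1) = ((m*(m-1) : ℕ) : ℤ) := by
    cases m with
    | zero => simp
    | succ k => push_cast [Nat.succ_sub_one]; ring
  have h2 := nat_two_dvd m
  omega

lemma int_binom_neg (n : ℕ) : (-(n:ℤ))*((-(n:ℤ))-1)/2 = ((n*(n+1)/2 : ℕ) : ℤ) := by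
  have h1 : (-(n:ℤ))*((-(n:ℤ))-1) = ((n*(n+1) : ℕ):ℤ) := by push_cast; ring
  have h2 : 2 ∣ (n*(n+1):ℕ) := (Nat.even_mul_succ_self n).two_dvd
  omega

lemma nat_binom_succ' (m : ℕ) : (m+1)*(m+2)/2 = m*(m+1)/2 + (m+1) := by
  have h2 := (Nat.even_mul_succ_self m).two_dvd
  have h1 : (m+1)*(m+2) = m*(m+1) + 2*(m+1) := by ring
  omega

lemma nat_binom_shift (n : ℕ) : n*(n+1)/2 = n*(n-1)/2 + n := by
  rw [Nat.mul_comm]; exact nat_binom_succ n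

lemma int_exp_key (k : ℤ) (m : ℕ) :
    (k - m)*((k - m) - 1)/2 = k*(k-1)/2 + ((m*(m-1)/2 : ℕ):ℤ) + (1-k)*m := by
  have h1 : (k - m)*((k - m) - 1) = k*(k-1) + (m:ℤ)*((m:ℤ)-1) + 2*((1-k)*m) := by ring
  have h2 := int_two_dvd k
  have h3 := int_two_dvd (m:ℤ)
  have h4 := int_binom_cast m
  omega

/-- theta terms -/
noncomputable def Af (q w : ℂ) : ℤ → ℂ := fun n => q ^ (n*(n-1)/2) * w ^ n

/-- q-exponential terms -/
noncomputable def Bf (q u : ℂ) : ℕ → ℂ := fun m => u ^ m / qPoch q q m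

lemma summable_norm_Af (hq0 : 0 < ‖q‖) (hq1 : ‖q‖ < 1) {w : ℂ} (hw0 : w ≠ 0) :
    Summable (fun n : ℤ => ‖Af q w n‖) := by
  rw [summable_int_iff_summable_nat_and_neg]
  constructor
  · have he : ∀ n:ℕ, Af q w (n:ℤ) = q^(n*(n-1)/2 : ℕ) * w^n := by
      intro n
      rw [Af, int_binom_cast n, zpow_natCast, zpow_natCast]
    apply summable_ratio (L := 0) one_pos (g := fun n => ‖q‖^n * ‖w‖)
    · simpa using (tendsto_pow_atTop_nhds_zero_of_lt_one (norm_nonneg q) hq1).mul_const ‖w‖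
    · intro n
      rw [norm_norm, norm_norm, he, he]
      have hrec : q^((n+1)*((n+1)-1)/2 : ℕ) * w^(n+1) = (q^(n*(n-1)/2:ℕ) * w^n) * (q^n * w) := by
        rw [show (n+1)*((n+1)-1)/2 = n*(n-1)/2 + n by simpa using nat_binom_succ n, pow_add]
        ring
      rw [hrec, norm_mul]
      apply le_of_eq
      simp only [norm_mul, norm_pow]
      ring
  · have he : ∀ n:ℕ, Af q w (-(n:ℤ)) = q^(n*(n+1)/2 : ℕ) * (w⁻¹)^n := by
      intro n
      rw [Af, int_binom_neg n, zpow_natCast, zpow_neg, zpow_natCast, inv_pow]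
    apply summable_ratio (L := 0) one_pos (g := fun n => ‖q‖^(n+1) * ‖w⁻¹‖)
    · simpa using (tendsto_norm_q_pow_succ hq1).mul_const ‖w⁻¹‖
    · intro n
      rw [norm_norm, norm_norm, he, he]
      have hrec : q^((n+1)*((n+1)+1)/2 : ℕ) * (w⁻¹)^(n+1)
          = (q^(n*(n+1)/2:ℕ) * (w⁻¹)^n) * (q^(n+1) * w⁻¹) := by
        rw [show (n+1)*((n+1)+1)/2 = n*(n+1)/2 + (n+1) from nat_binom_succ' n, pow_add]
        ring
      rw [hrec, norm_mul]
      apply le_of_eq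
      simp only [norm_mul, norm_pow, norm_inv]
      ring

lemma summable_norm_Bf (hq1 : ‖q‖ < 1) {u : ℂ} (hu1 : ‖u‖ < 1) :
    Summable (fun m : ℕ => ‖Bf q u m‖) := by
  apply summable_ratio (L := ‖u‖) hu1 (g := fun m => ‖u‖ / (1 - ‖q‖^(m+1)))
  · have h2 : Tendsto (fun m : ℕ => 1 - ‖q‖^(m+1)) atTop (𝓝 1) := by
      simpa using (tendsto_const_nhds (x := (1:ℝ))).sub (tendsto_norm_q_pow_succ hq1)
    simpa [Pi.div_def] using (tendsto_const_nhds (x := ‖u‖)).div h2 one_ne_zero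
  · intro m
    have h1 : qPoch q q m ≠ 0 := qPoch_ne_zero hq1 m
    have h2 : (1 - q*q^m) ≠ 0 := one_sub_ne (norm_q_mul_pow_lt hq1 m)
    have hrec : Bf q u (m+1) = Bf q u m * (u / (1 - q*q^m)) := by
      rw [Bf, Bf, qPoch_succ, pow_succ]
      field_simp
    rw [norm_norm, norm_norm, hrec, norm_mul, norm_div]
    rw [mul_comm (‖u‖ / (1 - ‖q‖^(m+1))) _]
    apply mul_le_mul_of_nonneg_left _ (norm_nonneg _)
    have h3 := norm_one_sub_q_pow_pos hq1 m
    have h4 := norm_one_sub_ge hq1 m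
    have h5 : (0:ℝ) < ‖1 - q*q^m‖ := lt_of_lt_of_le h3 h4
    rw [div_le_div_iff₀ h5 h3]
    exact mul_le_mul_of_nonneg_left h4 (norm_nonneg u)


lemma Af_mul_Bf (hq1 : ‖q‖ < 1) (hqne : q ≠ 0) {x : ℂ} (hx0 : x ≠ 0) (k : ℤ) (m : ℕ) :
    Af q (-(x/q)) (k - m) * Bf q (x/q) m
      = ((-(x/q))^k * q^(k*(k-1)/2)) * T q (q^(1-k)) m := by
  have hu0 : x/q ≠ 0 := div_ne_zero hx0 hqne
  have hw0 : (-(x/q)) ≠ 0 := neg_ne_zero.2 hu0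
  have hP : qPoch q q m ≠ 0 := qPoch_ne_zero hq1 m
  have h1 : q ^ ((k - (m:ℤ)) * (k - (m:ℤ) - 1) / 2)
      = q ^ (k*(k-1)/2) * q^(m*(m-1)/2 : ℕ) * (q^(1-k))^m := by
    rw [int_exp_key k m, zpow_add₀ hqne, zpow_add₀ hqne, zpow_natCast q (m*(m-1)/2),
      zpow_mul, zpow_natCast]
  have h2 : (-(x/q)) ^ (k - (m:ℤ)) = (-(x/q))^k * ((-1:ℂ)^m * ((x/q)^m)⁻¹) := by
    rw [zpow_sub₀ hw0, zpow_natCast, div_eq_mul_inv, neg_pow, mul_inv, ← inv_pow, inv_neg,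
      inv_one]
  rw [Af, Bf, T, h1, h2]
  have hcan : ((x/q)^m)⁻¹ * (x/q)^m = 1 := inv_mul_cancel₀ (pow_ne_zero _ hu0)
  linear_combination (q ^ (k * (k - 1) / 2) * (q^(m*(m-1)/2 : ℕ)) * (q ^ (1 - k)) ^ m *
    (-(x/q)) ^ k * (-1:ℂ) ^ m / qPoch q q m) * hcan

lemma h_nat (hq1 : ‖q‖ < 1) (hqne : q ≠ 0) (n : ℕ) (hn : n ≠ 0) :
    F q (q^(1-(n:ℤ))) = 0 := by
  rw [F_iter hq1 _ n]
  have hmem : n - 1 ∈ Finset.range n := by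
    simp only [Finset.mem_range]
    omega
  rw [qPoch, Finset.prod_eq_zero hmem ?_, zero_mul]
  have hc : ((n-1:ℕ):ℤ) = (n:ℤ)-1 := by omega
  rw [← zpow_natCast q (n-1), ← zpow_add₀ hqne, hc, show (1-(n:ℤ)) + ((n:ℤ)-1) = 0 by ring,
    zpow_zero, sub_self]

lemma h_neg (hq1 : ‖q‖ < 1) (hqne : q ≠ 0) {x : ℂ} (hx0 : x ≠ 0) (n : ℕ) :
    (-(x/q))^(-(n:ℤ)) * q^((-(n:ℤ))*((-(n:ℤ))-1)/2) * F q (q^(1-(-(n:ℤ))))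
      = F q q * T q (q^2/x) n := by
  have hu0 : x/q ≠ 0 := div_ne_zero hx0 hqne
  have hw0 : (-(x/q)) ≠ 0 := neg_ne_zero.2 hu0
  have hP : qPoch q q n ≠ 0 := qPoch_ne_zero hq1 n
  have hz : q^(1-(-(n:ℤ))) = q^n * q := by
    rw [show (1-(-(n:ℤ))) = ((n+1 : ℕ):ℤ) by push_cast; ring, zpow_natCast, pow_succ]
  have hF2 : F q (q^(1-(-(n:ℤ)))) = F q q / qPoch q q n := by
    rw [hz, eq_div_iff hP, mul_comm, ← F_iter hq1 q n]
  rw [hF2, int_binom_neg n, zpow_natCast, zpow_neg, zpow_natCast, ← inv_pow, inv_neg,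
    inv_div, T, show n*(n+1)/2 = n*(n-1)/2 + n from nat_binom_shift n, pow_add]
  ring

def shiftEquiv : ℤ × ℕ ≃ ℤ × ℕ where
  toFun p := (p.1 - p.2, p.2)
  invFun p := (p.1 + p.2, p.2)
  left_inv p := by simp
  right_inv p := by simp

lemma theta_mul_e (hq0 : 0 < ‖q‖) (hq1 : ‖q‖ < 1) {x : ℂ} (hx0 : x ≠ 0)
    (hu1 : ‖x/q‖ < 1) :
    (∑' n : ℤ, Af q (-(x/q)) n) * (∑' m : ℕ, Bf q (x/q) m) = F q q * F q (q^2/x) := by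
  have hqne : q ≠ 0 := by
    intro h
    rw [h] at hq0
    simp at hq0
  have hu0 : x/q ≠ 0 := div_ne_zero hx0 hqne
  have hw0 : (-(x/q)) ≠ 0 := neg_ne_zero.2 hu0
  have hA := summable_norm_Af hq0 hq1 hw0
  have hB := summable_norm_Bf hq1 hu1
  have hFp : Summable (fun p : ℤ×ℕ => Af q (-(x/q)) p.1 * Bf q (x/q) p.2) :=
    summable_mul_of_summable_norm hA hB
  have hcomp : (fun p : ℤ×ℕ => Af q (-(x/q)) (p.1 - p.2) * Bf q (x/q) p.2)
      = (fun p : ℤ×ℕ => Af q (-(x/q)) p.1 * Bf q (x/q) p.2) ∘ shiftEquiv := by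
    funext p
    simp [shiftEquiv]
  have hG : Summable (fun p : ℤ×ℕ => Af q (-(x/q)) (p.1 - p.2) * Bf q (x/q) p.2) := by
    rw [hcomp]
    exact hFp.comp_injective shiftEquiv.injective
  have hfib : ∀ k : ℤ, Summable (fun m : ℕ => Af q (-(x/q)) (k - m) * Bf q (x/q) m) :=
    fun k => hG.prod_factor k
  have Htot : HasSum (fun k : ℤ => ∑' m : ℕ, Af q (-(x/q)) (k - m) * Bf q (x/q) m)
      (∑' p : ℤ×ℕ, Af q (-(x/q)) (p.1 - p.2) * Bf q (x/q) p.2) :=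
    hG.hasSum.prod_fiberwise (fun k => (hfib k).hasSum)
  have hσeq : (∑' p : ℤ×ℕ, Af q (-(x/q)) (p.1 - p.2) * Bf q (x/q) p.2)
      = ∑' p : ℤ×ℕ, Af q (-(x/q)) p.1 * Bf q (x/q) p.2 := by
    rw [show (fun p : ℤ×ℕ => Af q (-(x/q)) (p.1 - p.2) * Bf q (x/q) p.2)
        = fun p : ℤ×ℕ => ((fun p : ℤ×ℕ => Af q (-(x/q)) p.1 * Bf q (x/q) p.2) (shiftEquiv p))
        from hcomp]
    exact shiftEquiv.tsum_eq (fun p : ℤ×ℕ => Af q (-(x/q)) p.1 * Bf q (x/q) p.2)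
  have hclosed : ∀ k : ℤ, (∑' m : ℕ, Af q (-(x/q)) (k - m) * Bf q (x/q) m)
      = ((-(x/q))^k * q^(k*(k-1)/2)) * F q (q^(1-k)) := by
    intro k
    calc (∑' m : ℕ, Af q (-(x/q)) (k - m) * Bf q (x/q) m)
        = ∑' m : ℕ, ((-(x/q))^k * q^(k*(k-1)/2)) * T q (q^(1-k)) m :=
          tsum_congr (Af_mul_Bf hq1 hqne hx0 k)
      _ = _ := by rw [tsum_mul_left, F]
  rw [tsum_mul_tsum_of_summable_norm hA hB, ← hσeq, ← Htot.tsum_eq]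
  have hs1 : Summable (fun n : ℕ => ∑' m : ℕ, Af q (-(x/q)) ((n:ℤ) - m) * Bf q (x/q) m) := by
    apply summable_of_ne_finset_zero (s := {0})
    intro n hn
    rw [hclosed, h_nat hq1 hqne n (by simpa using hn), mul_zero]
  have hTs := summable_T hq1 (q^2/x)
  have hfun : (fun n : ℕ => ∑' m : ℕ, Af q (-(x/q)) ((-((n:ℤ)+1)) - m) * Bf q (x/q) m)
      = fun n : ℕ => F q q * T q (q^2/x) (n+1) := by
    funext n
    rw [hclosed, show (-((n:ℤ)+1)) = -((n+1:ℕ):ℤ) by push_cast; ring, h_neg hq1 hqne hx0 (n+1)]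
  have hs2 : Summable (fun n : ℕ => ∑' m : ℕ, Af q (-(x/q)) ((-((n:ℤ)+1)) - m) * Bf q (x/q) m) := by
    rw [hfun]
    exact ((summable_nat_add_iff 1).2 hTs).mul_left _
  rw [tsum_of_nat_of_neg_add_one
    (f := fun k : ℤ => ∑' m : ℕ, Af q (-(x/q)) (k - m) * Bf q (x/q) m) hs1 hs2]
  have hfirst : (∑' n : ℕ, ∑' m : ℕ, Af q (-(x/q)) ((n:ℤ) - m) * Bf q (x/q) m)
      = F q q * T q (q^2/x) 0 := by
    rw [tsum_eq_single 0 (fun n hn => by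
      rw [hclosed, h_nat hq1 hqne n hn, mul_zero])]
    rw [hclosed]
    have := h_neg hq1 hqne hx0 0
    simpa using this
  rw [hfirst, hfun, tsum_mul_left, ← mul_add, ← Summable.tsum_eq_zero_add hTs, ← F]


lemma qPoch_pow_ne_zero (hq1 : ‖q‖ < 1) (a b m : ℕ) (ha : a ≠ 0) :
    qPoch (q^a) (q^b) m ≠ 0 := by
  rw [qPoch, Finset.prod_ne_zero_iff]
  intro j _
  rw [← pow_mul, ← pow_add]
  exact one_sub_ne (by
    rw [norm_pow]
    exact pow_lt_one₀ (norm_nonneg q) hq1 (by omega))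

lemma qPoch_even (q : ℂ) (m : ℕ) :
    qPoch q q (2*m) = qPoch q (q^2) m * qPoch (q^2) (q^2) m := by
  induction m with
  | zero => simp [qPoch]
  | succ n ih =>
    rw [show 2*(n+1) = (2*n)+1+1 by ring, qPoch_succ, qPoch_succ, ih,
      qPoch_succ, qPoch_succ]
    ring

lemma qPoch_odd (q : ℂ) (m : ℕ) :
    qPoch q q (2*m+1) = (1-q) * (qPoch (q^3) (q^2) m * qPoch (q^2) (q^2) m) := by
  induction m with
  | zero => simp [qPoch]
  | succ n ih =>
    rw [show 2*(n+1)+1 = (2*n+1)+1+1 by ring, qPoch_succ, qPoch_succ, ih,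
      qPoch_succ, qPoch_succ]
    ring

lemma T_even (hq1 : ‖q‖ < 1) {x : ℂ} (hx0 : x ≠ 0) (hqne : q ≠ 0) (m : ℕ) :
    T q (q^2/x) (2*m)
      = (q^2)^(m*(m-1)) * (q^5/x^2)^m / (qPoch q (q^2) m * qPoch (q^2) (q^2) m) := by
  have hexp : 2*m*(2*m-1)/2 = 2*(m*(m-1)) + m := by
    have h1 : 2*m*(2*m-1) = 2*(2*(m*(m-1)) + m) := by
      cases m with
      | zero => rfl
      | succ k =>
        have h2 : 2*(k+1)-1 = 2*k+1 := by omega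
        rw [h2, Nat.succ_sub_one]
        ring
    omega
  rw [T, qPoch_even, hexp, show ((-1:ℂ))^(2*m) = 1 by rw [pow_mul]; norm_num, one_mul,
    pow_add, pow_mul]
  congr 1
  field_simp
  ring

lemma T_odd (hq1 : ‖q‖ < 1) {x : ℂ} (hx0 : x ≠ 0) (hqne : q ≠ 0) (m : ℕ) :
    T q (q^2/x) (2*m+1)
      = -(q^2/((1-q)*x)) * ((q^2)^(m*(m-1)) * (q^7/x^2)^m
          / (qPoch (q^3) (q^2) m * qPoch (q^2) (q^2) m)) := by
  have h1q : (1-q) ≠ 0 := one_sub_ne (by simpa using hq1)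
  have hP1 : qPoch (q^3) (q^2) m ≠ 0 := qPoch_pow_ne_zero hq1 3 2 m (by norm_num)
  have hP2 : qPoch (q^2) (q^2) m ≠ 0 := qPoch_pow_ne_zero hq1 2 2 m (by norm_num)
  have hexp : (2*m+1)*((2*m+1)-1)/2 = 2*(m*(m-1)) + 3*m := by
    have h1 : (2*m+1)*(2*m) = 2*(2*(m*(m-1)) + 3*m) := by
      cases m with
      | zero => rfl
      | succ k =>
        rw [Nat.succ_sub_one]
        ring
    have h2 : (2*m+1)-1 = 2*m := by omega
    rw [h2]
    omega
  rw [T, qPoch_odd, hexp, show ((-1:ℂ))^(2*m+1) = -1 by rw [pow_succ, pow_mul]; norm_num,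
    pow_add, pow_mul]
  field_simp
  ring_nf
  simp [hx0]

end QSplitAux

open QSplitAux in
theorem qExp_e_split_even_odd (q x : ℂ) (hq0 : 0 < ‖q‖) (hq1 : ‖q‖ < 1)
    (hx0 : x ≠ 0) (hx1 : ‖x / q‖ < 1) (hspiral : ∀ k : ℤ, x ≠ q ^ k) :
    qExp_e q (x / q)
      = qPochInf q q / jTheta q (-(x / q)) * phi01 q (q ^ 2) (q ^ 5 / x ^ 2)
        - qPochInf q q / jTheta q (-(x / q)) * (q ^ 2 / ((1 - q) * x)) *
            phi01 (q ^ 3) (q ^ 2) (q ^ 7 / x ^ 2) := by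
  have hqne : q ≠ 0 := by
    intro h
    rw [h] at hq0
    simp at hq0
  have h1q : (1-q) ≠ 0 := one_sub_ne (by simpa using hq1)
  have hTs := summable_T hq1 (q^2/x)
  have he : Summable (fun m : ℕ => T q (q^2/x) (2*m)) := by
    have hc : (fun m : ℕ => T q (q^2/x) (2*m)) = (T q (q^2/x)) ∘ (fun m => 2*m) := rfl
    rw [hc]
    exact hTs.comp_injective (fun a b hab => by omega)
  have ho : Summable (fun m : ℕ => T q (q^2/x) (2*m+1)) := by
    have hc : (fun m : ℕ => T q (q^2/x) (2*m+1)) = (T q (q^2/x)) ∘ (fun m => 2*m+1) := rfl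
    rw [hc]
    exact hTs.comp_injective (fun a b hab => by omega)
  have hsplit : F q (q^2/x)
      = phi01 q (q^2) (q^5/x^2) - q^2/((1-q)*x) * phi01 (q^3) (q^2) (q^7/x^2) := by
    rw [F, ← tsum_even_add_odd he ho]
    have hev : (∑' m : ℕ, T q (q^2/x) (2*m)) = phi01 q (q^2) (q^5/x^2) := by
      rw [phi01]
      exact tsum_congr (fun m => T_even hq1 hx0 hqne m)
    have hod : (∑' m : ℕ, T q (q^2/x) (2*m+1))
        = -(q^2/((1-q)*x)) * phi01 (q^3) (q^2) (q^7/x^2) := by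
      rw [phi01, ← tsum_mul_left]
      exact tsum_congr (fun m => T_odd hq1 hx0 hqne m)
    rw [hev, hod]
    ring
  have hθe : jTheta q (-(x/q)) * qExp_e q (x/q) = F q q * F q (q^2/x) := by
    have h := theta_mul_e hq0 hq1 hx0 hx1
    simp only [Af, Bf] at h
    rw [jTheta, qExp_e]
    exact h
  have hFqq : F q q ≠ 0 := F_q_ne_zero hq1
  have hS : F q (q^2/x) ≠ 0 := by
    apply F_ne_zero hq1
    intro j h
    apply hspiral ((j:ℤ)+2)
    have hx : x = q^2 * q^j := by
      have h' : (q^2/x) * q^j = 1 := by linear_combination -h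
      field_simp at h'
      linear_combination -h'
    rw [hx, show ((j:ℤ)+2) = ((j+2 : ℕ):ℤ) by push_cast; ring, zpow_natCast, pow_add]
    ring
  have hθ : jTheta q (-(x/q)) ≠ 0 := by
    intro h0
    rw [h0, zero_mul] at hθe
    exact mul_ne_zero hFqq hS hθe.symm
  have hPinf : qPochInf q q = F q q := by
    rw [qPochInf]
    exact qPochInf_eq hq1
  rw [hPinf]
  have hkey : qExp_e q (x/q) = (F q q * (phi01 q (q^2) (q^5/x^2)
      - q^2/((1-q)*x) * phi01 (q^3) (q^2) (q^7/x^2))) / jTheta q (-(x/q)) := by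
    rw [eq_div_iff hθ, ← hsplit]
    linear_combination hθe
  rw [hkey]
  ring
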